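/- For a weak simple k-wave with midpoint ū = W_k(u_-, ζ/2) and endpoints u_∓ = W_k(ū, ∓ζ/2), the flux and conserved-quantity jumps satisfy [f] = λ_k(ū)[q] + O(ζ³) as ζ → 0, where [q] = q(u_+) - q(u_-) and [f] = f(u_+) - f(u_-). Consequently the least squared speed satisfies s_* = λ_k(ū) + O(ζ²) and the minimal residual satisfies R_* = O(ζ³). -/

import Mathlib

open Asymptotics

-- derivative O(x^n) near 0 and ψ 0 = 0 implies ψ = O(x^(n+1))
lemma deriv_bigO_step {E : Type*} [NormedAddCommGroup E] [NormedSpace ℝ E]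
    {ψ ψ' : ℝ → E} {n : ℕ} (h0 : ψ 0 = 0) (hd : ∀ x, HasDerivAt ψ (ψ' x) x)
    (hO : ψ' =O[nhds 0] fun x => x ^ n) :
    ψ =O[nhds 0] fun x => x ^ (n + 1) := by
  obtain ⟨C, hC0, hC⟩ := hO.exists_pos
  rw [IsBigOWith, Metric.eventually_nhds_iff] at hC
  obtain ⟨δ, hδ, hball⟩ := hC
  rw [isBigO_iff]
  refine ⟨C, Metric.eventually_nhds_iff.2 ⟨δ, hδ, fun ζ hζ => ?_⟩⟩
  simp only [Real.dist_eq, sub_zero] at hζ hball ⊢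
  have key : ∀ t ∈ Set.uIcc (0:ℝ) ζ, ‖ψ' t‖ ≤ C * |ζ| ^ n := by
    intro t ht
    rw [Set.mem_uIcc] at ht
    have habs : |t| ≤ |ζ| := by
      rcases ht with ⟨h1, h2⟩ | ⟨h1, h2⟩ <;> rw [abs_le] <;>
        constructor <;> linarith [le_abs_self ζ, neg_abs_le ζ]
    have := hball (lt_of_le_of_lt habs hζ)
    calc ‖ψ' t‖ ≤ C * ‖t ^ n‖ := this
    _ = C * |t| ^ n := by rw [norm_pow, Real.norm_eq_abs]
    _ ≤ C * |ζ| ^ n := by gcongr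
  have := (convex_uIcc (0:ℝ) ζ).norm_image_sub_le_of_norm_hasDerivWithin_le
    (fun x _ => (hd x).hasDerivWithinAt) key Set.left_mem_uIcc Set.right_mem_uIcc
  rw [h0, sub_zero, sub_zero] at this
  calc ‖ψ ζ‖ ≤ C * |ζ| ^ n * ‖ζ‖ := this
  _ = C * ‖ζ ^ (n+1)‖ := by
      rw [norm_pow, Real.norm_eq_abs, pow_succ]; ring

lemma diff_comp_bigO {F : Type*} [NormedAddCommGroup F] [NormedSpace ℝ F]
    (g : ℝ → ℝ) (hg : Filter.Tendsto g (nhds (0:ℝ)) (nhds 0))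
    (hgb : ∀ ζ, |g ζ| ≤ |ζ|) (h : ℝ → F) (hh : DifferentiableAt ℝ h 0) :
    (fun ζ => h (g ζ) - h 0) =O[nhds 0] (fun ζ => ζ) := by
  have h1 : (fun x => h x - h 0) =O[nhds 0] (fun x => x - 0) := hh.isBigO_sub
  have h2 := h1.comp_tendsto hg
  refine IsBigO.trans (show (fun ζ => h (g ζ) - h 0) =O[nhds 0] g by simpa [Function.comp_def] using h2) (isBigO_iff.2 ⟨1, Filter.Eventually.of_forall fun ζ => ?_⟩)
  simpa [Real.norm_eq_abs] using hgb ζ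

set_option maxHeartbeats 1000000 in
theorem weak_simple_wave_expansion {N : ℕ}
    (qc fc : ℝ → EuclideanSpace ℝ (Fin N)) (lam : ℝ → ℝ)
    (hq : ContDiff ℝ 2 qc) (hlam : ContDiff ℝ 2 lam)
    (hf : ∀ z, HasDerivAt fc (lam z • deriv qc z) z)
    (hq0 : deriv qc 0 ≠ 0) :
    (Asymptotics.IsBigO (nhds (0:ℝ))
      (fun ζ : ℝ => fc (ζ/2) - fc (-(ζ/2)) - lam 0 • (qc (ζ/2) - qc (-(ζ/2))))
      (fun ζ => ζ^3)) ∧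
    (Asymptotics.IsBigO (nhdsWithin (0:ℝ) {0}ᶜ)
      (fun ζ : ℝ =>
        (inner ℝ (qc (ζ/2) - qc (-(ζ/2))) (fc (ζ/2) - fc (-(ζ/2))) : ℝ)
          / ‖qc (ζ/2) - qc (-(ζ/2))‖^2 - lam 0)
      (fun ζ => ζ^2)) ∧
    (Asymptotics.IsBigO (nhdsWithin (0:ℝ) {0}ᶜ)
      (fun ζ : ℝ => fc (ζ/2) - fc (-(ζ/2)) -
        ((inner ℝ (qc (ζ/2) - qc (-(ζ/2))) (fc (ζ/2) - fc (-(ζ/2))) : ℝ)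
          / ‖qc (ζ/2) - qc (-(ζ/2))‖^2) • (qc (ζ/2) - qc (-(ζ/2))))
      (fun ζ => ζ^3)) := by
  -- basic differentiability facts
  have h21 : (2 : WithTop ℕ∞) = 1 + 1 := by norm_num
  have hqd : Differentiable ℝ qc := hq.differentiable (by norm_num)
  have hdq1 : ContDiff ℝ 1 (deriv qc) := (contDiff_succ_iff_deriv.mp (h21 ▸ hq)).2.2
  have hdqd : Differentiable ℝ (deriv qc) := hdq1.differentiable one_ne_zero
  have hlamd : Differentiable ℝ lam := hlam.differentiable (by norm_num)
  have hdl1 : ContDiff ℝ 1 (deriv lam) := (contDiff_succ_iff_deriv.mp (h21 ▸ hlam)).2.2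
  have hdld : Differentiable ℝ (deriv lam) := hdl1.differentiable one_ne_zero
  -- inner maps
  have hhalf : ∀ ζ : ℝ, HasDerivAt (fun ζ : ℝ => ζ/2) ((1:ℝ)/2) ζ := fun ζ => by
    simpa using (hasDerivAt_id ζ).div_const 2
  have hneghalf : ∀ ζ : ℝ, HasDerivAt (fun ζ : ℝ => -(ζ/2)) (-((1:ℝ)/2)) ζ := fun ζ =>
    (hhalf ζ).neg
  -- derivatives of composed functions
  have hfc_p : ∀ ζ : ℝ, HasDerivAt (fun ζ : ℝ => fc (ζ/2))
      (((1:ℝ)/2) • (lam (ζ/2) • deriv qc (ζ/2))) ζ := fun ζ =>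
    (hf (ζ/2)).scomp ζ (hhalf ζ)
  have hfc_m : ∀ ζ : ℝ, HasDerivAt (fun ζ : ℝ => fc (-(ζ/2)))
      ((-((1:ℝ)/2)) • (lam (-(ζ/2)) • deriv qc (-(ζ/2)))) ζ := fun ζ =>
    (hf (-(ζ/2))).scomp ζ (hneghalf ζ)
  have hqc_p : ∀ ζ : ℝ, HasDerivAt (fun ζ : ℝ => qc (ζ/2))
      (((1:ℝ)/2) • deriv qc (ζ/2)) ζ := fun ζ =>
    ((hqd (ζ/2)).hasDerivAt).scomp ζ (hhalf ζ)
  have hqc_m : ∀ ζ : ℝ, HasDerivAt (fun ζ : ℝ => qc (-(ζ/2)))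
      ((-((1:ℝ)/2)) • deriv qc (-(ζ/2))) ζ := fun ζ =>
    ((hqd (-(ζ/2))).hasDerivAt).scomp ζ (hneghalf ζ)
  have hlam_p : ∀ ζ : ℝ, HasDerivAt (fun ζ : ℝ => lam (ζ/2))
      (((1:ℝ)/2) • deriv lam (ζ/2)) ζ := fun ζ =>
    ((hlamd (ζ/2)).hasDerivAt).scomp ζ (hhalf ζ)
  have hlam_m : ∀ ζ : ℝ, HasDerivAt (fun ζ : ℝ => lam (-(ζ/2)))
      ((-((1:ℝ)/2)) • deriv lam (-(ζ/2))) ζ := fun ζ =>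
    ((hlamd (-(ζ/2))).hasDerivAt).scomp ζ (hneghalf ζ)
  -- big-O of basic differences
  have htp : Filter.Tendsto (fun ζ : ℝ => ζ/2) (nhds 0) (nhds 0) := by
    simpa using (continuous_id.div_const (2:ℝ)).tendsto 0
  have htm : Filter.Tendsto (fun ζ : ℝ => -(ζ/2)) (nhds 0) (nhds 0) := by
    simpa using htp.neg
  have hgb_p : ∀ ζ : ℝ, |ζ/2| ≤ |ζ| := fun ζ => by
    rw [abs_div, abs_two]
    nlinarith [abs_nonneg ζ]
  have hgb_m : ∀ ζ : ℝ, |(-(ζ/2))| ≤ |ζ| := fun ζ => by rw [abs_neg]; exact hgb_p ζ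
  have hOlam_p : (fun ζ : ℝ => lam (ζ/2) - lam 0) =O[nhds 0] (fun ζ => ζ) :=
    diff_comp_bigO _ htp hgb_p lam (hlamd 0)
  have hOlam_m : (fun ζ : ℝ => lam (-(ζ/2)) - lam 0) =O[nhds 0] (fun ζ => ζ) :=
    diff_comp_bigO _ htm hgb_m lam (hlamd 0)
  have hOdq_p : (fun ζ : ℝ => deriv qc (ζ/2) - deriv qc 0) =O[nhds 0] (fun ζ => ζ) :=
    diff_comp_bigO _ htp hgb_p (deriv qc) (hdqd 0)
  have hOdq_m : (fun ζ : ℝ => deriv qc (-(ζ/2)) - deriv qc 0) =O[nhds 0] (fun ζ => ζ) :=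
    diff_comp_bigO _ htm hgb_m (deriv qc) (hdqd 0)
  have hOdl_p : (fun ζ : ℝ => deriv lam (ζ/2) - deriv lam 0) =O[nhds 0] (fun ζ => ζ) :=
    diff_comp_bigO _ htp hgb_p (deriv lam) (hdld 0)
  have hOdl_m : (fun ζ : ℝ => deriv lam (-(ζ/2)) - deriv lam 0) =O[nhds 0] (fun ζ => ζ) :=
    diff_comp_bigO _ htm hgb_m (deriv lam) (hdld 0)
  -- second difference of lam is O(ζ²)
  have hsq : (fun ζ : ℝ => ζ • ζ) = (fun ζ : ℝ => ζ ^ 2) := funext fun ζ => by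
    simp [sq, smul_eq_mul]
  have hu : (fun ζ : ℝ => lam (ζ/2) + lam (-(ζ/2)) - 2 * lam 0)
      =O[nhds 0] (fun ζ => ζ ^ (1+1)) := by
    refine deriv_bigO_step
      (ψ' := fun ζ => ((1:ℝ)/2) • deriv lam (ζ/2) + (-((1:ℝ)/2)) • deriv lam (-(ζ/2)))
      (by norm_num [two_mul]) (fun ζ => ?_) ?_
    · exact ((hlam_p ζ).add (hlam_m ζ)).sub_const (2 * lam 0)
    · have := (hOdl_p.sub hOdl_m).const_smul_left ((1:ℝ)/2)
      refine (this.congr_left fun ζ => by simp [smul_eq_mul]; ring).trans ?_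
      refine IsBigO.congr_left ?_ (fun ζ => rfl)
      simpa [pow_one] using isBigO_refl (fun ζ : ℝ => ζ) (nhds 0)
  -- the flux defect and its derivative
  set D : ℝ → EuclideanSpace ℝ (Fin N) := fun ζ =>
    ((1:ℝ)/2) • ((lam (ζ/2) - lam 0) • deriv qc (ζ/2)
      + (lam (-(ζ/2)) - lam 0) • deriv qc (-(ζ/2))) with hD_def
  have hφd : ∀ ζ : ℝ, HasDerivAt
      (fun ζ : ℝ => fc (ζ/2) - fc (-(ζ/2)) - lam 0 • (qc (ζ/2) - qc (-(ζ/2)))) (D ζ) ζ := by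
    intro ζ
    have h := ((hfc_p ζ).sub (hfc_m ζ)).sub (((hqc_p ζ).sub (hqc_m ζ)).const_smul (lam 0))
    refine h.congr_deriv ?_
    rw [hD_def]
    module
  have hDO : D =O[nhds 0] (fun ζ => ζ ^ 2) := by
    have hT1 : (fun ζ : ℝ => (lam (ζ/2) - lam 0) • (deriv qc (ζ/2) - deriv qc 0))
        =O[nhds 0] (fun ζ => ζ ^ 2) := by
      have := hOlam_p.smul hOdq_p
      rwa [hsq] at this
    have hT2 : (fun ζ : ℝ => (lam (-(ζ/2)) - lam 0) • (deriv qc (-(ζ/2)) - deriv qc 0))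
        =O[nhds 0] (fun ζ => ζ ^ 2) := by
      have := hOlam_m.smul hOdq_m
      rwa [hsq] at this
    have hT3 : (fun ζ : ℝ => (lam (ζ/2) + lam (-(ζ/2)) - 2 * lam 0) • deriv qc 0)
        =O[nhds 0] (fun ζ => ζ ^ 2) := by
      have := hu.smul (isBigO_const_const (deriv qc 0) (one_ne_zero (α := ℝ)) (nhds 0))
      simpa using this
    have h := ((hT1.add hT2).add hT3).const_smul_left ((1:ℝ)/2)
    refine h.congr_left fun ζ => ?_
    simp only [Pi.smul_apply, hD_def]
    module
  have part1 : (fun ζ : ℝ => fc (ζ/2) - fc (-(ζ/2)) - lam 0 • (qc (ζ/2) - qc (-(ζ/2))))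
      =O[nhds 0] (fun ζ => ζ ^ 3) := by
    have h0 : fc ((0:ℝ)/2) - fc (-((0:ℝ)/2)) - lam 0 • (qc ((0:ℝ)/2) - qc (-((0:ℝ)/2))) = 0 := by
      norm_num
    have := deriv_bigO_step (n := 2) h0 hφd hDO
    exact this
  -- lower bound on the jump of q
  have hn0 : (0:ℝ) < ‖deriv qc 0‖ := norm_pos_iff.2 hq0
  have hΔd : HasDerivAt (fun ζ : ℝ => qc (ζ/2) - qc (-(ζ/2))) (deriv qc 0) 0 := by
    have h := (hqc_p 0).sub (hqc_m 0)
    refine h.congr_deriv ?_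
    norm_num
    module
  have hlittle := (hasDerivAt_iff_isLittleO.mp hΔd)
  rw [isLittleO_iff] at hlittle
  have hev := hlittle (show (0:ℝ) < ‖deriv qc 0‖/2 by linarith)
  have hlow : ∀ᶠ ζ in nhds (0:ℝ),
      |ζ| ≤ (2/‖deriv qc 0‖) * ‖qc (ζ/2) - qc (-(ζ/2))‖ := by
    filter_upwards [hev] with ζ hζ
    have h0 : qc ((0:ℝ)/2) - qc (-((0:ℝ)/2)) = 0 := by norm_num
    rw [h0] at hζ
    simp only [sub_zero, Real.norm_eq_abs] at hζ
    have h1 : ‖(qc (ζ/2) - qc (-(ζ/2))) - ζ • deriv qc 0‖ ≤ ‖deriv qc 0‖/2 * |ζ| := by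
      simpa using hζ
    have h2 : ‖ζ • deriv qc 0‖ - ‖qc (ζ/2) - qc (-(ζ/2))‖ ≤ ‖deriv qc 0‖/2 * |ζ| := by
      refine le_trans ?_ h1
      have := norm_sub_norm_le (ζ • deriv qc 0) (qc (ζ/2) - qc (-(ζ/2)))
      refine le_trans this ?_
      rw [← norm_neg]
      simp [neg_sub]
    rw [norm_smul, Real.norm_eq_abs] at h2
    have hQ : ‖deriv qc 0‖/2 * |ζ| ≤ ‖qc (ζ/2) - qc (-(ζ/2))‖ := by linarith [mul_comm |ζ| ‖deriv qc 0‖]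
    rw [div_mul_eq_mul_div, le_div_iff₀ hn0]
    linarith [mul_comm |ζ| ‖deriv qc 0‖]
  -- set up constants
  obtain ⟨C₁, hC₁0, hC₁⟩ := part1.exists_pos
  rw [IsBigOWith] at hC₁
  have hc₂0 : (0:ℝ) < 2/‖deriv qc 0‖ := by positivity
  refine ⟨part1, ?_, ?_⟩
  · -- the speed expansion
    rw [isBigO_iff]
    refine ⟨C₁ * (2/‖deriv qc 0‖), ?_⟩
    filter_upwards [hC₁.filter_mono nhdsWithin_le_nhds, hlow.filter_mono nhdsWithin_le_nhds,
      self_mem_nhdsWithin] with ζ hE hb hne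
    have hζ0 : (0:ℝ) < |ζ| := abs_pos.2 hne
    set Δq := qc (ζ/2) - qc (-(ζ/2)) with hΔq_def
    set Δf := fc (ζ/2) - fc (-(ζ/2)) with hΔf_def
    set Q := ‖Δq‖ with hQ_def
    have hQpos : 0 < Q := by
      by_contra h
      push_neg at h
      have : (2/‖deriv qc 0‖) * Q ≤ 0 := mul_nonpos_of_nonneg_of_nonpos hc₂0.le h
      linarith
    have hQne : Q ≠ 0 := ne_of_gt hQpos
    have hdecomp : Δf = lam 0 • Δq + (Δf - lam 0 • Δq) := by module
    have hinner_decomp : (inner ℝ Δq Δf : ℝ)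
        = lam 0 * Q^2 + inner ℝ Δq (Δf - lam 0 • Δq) := by
      conv_lhs => rw [hdecomp]
      rw [inner_add_right, real_inner_smul_right, real_inner_self_eq_norm_sq]
    have hieq : (inner ℝ Δq Δf : ℝ)/Q^2 - lam 0 = (inner ℝ Δq (Δf - lam 0 • Δq) : ℝ)/Q^2 := by
      rw [hinner_decomp, add_div, mul_div_assoc, div_self (pow_ne_zero 2 hQne), mul_one,
        add_sub_cancel_left]
    have hCS : |(inner ℝ Δq (Δf - lam 0 • Δq) : ℝ)| ≤ Q * ‖Δf - lam 0 • Δq‖ :=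
      abs_real_inner_le_norm _ _
    have hEb : ‖Δf - lam 0 • Δq‖ ≤ C₁ * |ζ|^3 := by
      calc ‖Δf - lam 0 • Δq‖ ≤ C₁ * ‖ζ^3‖ := hE
      _ = C₁ * |ζ|^3 := by rw [Real.norm_eq_abs, abs_pow]
    have h3 : |ζ|^3 ≤ |ζ|^2 * ((2/‖deriv qc 0‖) * Q) := by
      calc |ζ|^3 = |ζ|^2 * |ζ| := by ring
      _ ≤ |ζ|^2 * ((2/‖deriv qc 0‖) * Q) := by gcongr
    rw [Real.norm_eq_abs, Real.norm_eq_abs, hieq, abs_div,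
      abs_of_nonneg (by positivity : (0:ℝ) ≤ Q^2), abs_pow,
      div_le_iff₀ (by positivity : (0:ℝ) < Q^2)]
    nlinarith [mul_le_mul_of_nonneg_left hEb hQpos.le, norm_nonneg (Δf - lam 0 • Δq),
      mul_le_mul_of_nonneg_left h3 (mul_pos hC₁0 hQpos).le]
  · -- the minimal residual
    rw [isBigO_iff]
    refine ⟨2 * C₁, ?_⟩
    filter_upwards [hC₁.filter_mono nhdsWithin_le_nhds, hlow.filter_mono nhdsWithin_le_nhds,
      self_mem_nhdsWithin] with ζ hE hb hne
    have hζ0 : (0:ℝ) < |ζ| := abs_pos.2 hne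
    set Δq := qc (ζ/2) - qc (-(ζ/2)) with hΔq_def
    set Δf := fc (ζ/2) - fc (-(ζ/2)) with hΔf_def
    set Q := ‖Δq‖ with hQ_def
    have hQpos : 0 < Q := by
      by_contra h
      push_neg at h
      have : (2/‖deriv qc 0‖) * Q ≤ 0 := mul_nonpos_of_nonneg_of_nonpos hc₂0.le h
      linarith
    have hQne : Q ≠ 0 := ne_of_gt hQpos
    have hdecomp : Δf = lam 0 • Δq + (Δf - lam 0 • Δq) := by module
    have hinner_decomp : (inner ℝ Δq Δf : ℝ)
        = lam 0 * Q^2 + inner ℝ Δq (Δf - lam 0 • Δq) := by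
      conv_lhs => rw [hdecomp]
      rw [inner_add_right, real_inner_smul_right, real_inner_self_eq_norm_sq]
    have hieq : (inner ℝ Δq Δf : ℝ)/Q^2 - lam 0 = (inner ℝ Δq (Δf - lam 0 • Δq) : ℝ)/Q^2 := by
      rw [hinner_decomp, add_div, mul_div_assoc, div_self (pow_ne_zero 2 hQne), mul_one,
        add_sub_cancel_left]
    have hCS : |(inner ℝ Δq (Δf - lam 0 • Δq) : ℝ)| ≤ Q * ‖Δf - lam 0 • Δq‖ :=
      abs_real_inner_le_norm _ _
    set s : ℝ := (inner ℝ Δq Δf : ℝ)/Q^2 with hs_def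
    have hsl : |s - lam 0| * Q ≤ ‖Δf - lam 0 • Δq‖ := by
      rw [hs_def, hieq, abs_div, abs_of_nonneg (by positivity : (0:ℝ) ≤ Q^2),
        div_mul_eq_mul_div, div_le_iff₀ (by positivity : (0:ℝ) < Q^2)]
      calc |(inner ℝ Δq (Δf - lam 0 • Δq) : ℝ)| * Q ≤ (Q * ‖Δf - lam 0 • Δq‖) * Q :=
            mul_le_mul_of_nonneg_right hCS hQpos.le
      _ = ‖Δf - lam 0 • Δq‖ * Q^2 := by ring
    have hsplit : Δf - s • Δq = (Δf - lam 0 • Δq) - (s - lam 0) • Δq := by module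
    calc ‖Δf - s • Δq‖ = ‖(Δf - lam 0 • Δq) - (s - lam 0) • Δq‖ := by rw [hsplit]
    _ ≤ ‖Δf - lam 0 • Δq‖ + ‖(s - lam 0) • Δq‖ := norm_sub_le _ _
    _ = ‖Δf - lam 0 • Δq‖ + |s - lam 0| * Q := by rw [norm_smul, Real.norm_eq_abs]
    _ ≤ ‖Δf - lam 0 • Δq‖ + ‖Δf - lam 0 • Δq‖ := by linarith
    _ ≤ 2 * C₁ * ‖ζ^3‖ := by linarith [hE]
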